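/- Let a > 0, b, d ∈ ℝ, let σ be a nonnegative Borel measure on ℝ with σ(ℝ) = 1 and σ(ℝ ∖ [−c, c]) = 0 for some 0 < c < 1, let s_k := ∫ x^k dσ (with s_{−1} := 0), s⃗ := (0, s₀, s₁, …) ∈ ℓ², and define Â w = a·S w + b·w + d·⟨w, s⃗⟩·e₀ on ℓ² (S the right shift). Let z ∈ ℂ satisfy |z − b| > a, set s(z) := Σ_{k=0}^∞ (−1)·(a/(z−b))^{k+1}·s_{k−1} (the series converges absolutely), and assume a + d·s(z) ≠ 0. Then the vector f := (1/(a + d·s(z)))·Σ_{k=0}^∞ (−1)·(a/(z−b))^{k+1}·e_k belongs to ℓ² and satisfies Â f − z·f = e₀; that is, f is the resolvent of Â at z applied to e₀. -/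

import Mathlib

open MeasureTheory

noncomputable section

/-- The right shift `S(c₀, c₁, c₂, …) = (0, c₀, c₁, …)` on sequences. -/
def shiftSeq (w : ℕ → ℂ) : ℕ → ℂ := fun k => if k = 0 then 0 else w (k - 1)

/-- The operator `Â w = a·S w + b·w + d·⟨w, s⃗⟩·e₀` on sequences. -/
def hatA (a b d : ℝ) (sZ : ℕ → ℂ) (w : ℕ → ℂ) : ℕ → ℂ := fun k =>
  (a : ℂ) * shiftSeq w k + (b : ℂ) * w k
    + (if k = 0 then (d : ℂ) * ∑' j : ℕ, w j * (starRingEnd ℂ) (sZ j) else 0)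

/-- Explicit formula for the resolvent of `Â` at `z` applied to `e₀`: with
`s(z) = Σ_k −(a/(z−b))^{k+1} s_{k−1}` and `f = (a + d·s(z))⁻¹ Σ_k −(a/(z−b))^{k+1} e_k`,
the series for `s(z)` converges absolutely, `f ∈ ℓ²`, and `Â f − z f = e₀`. -/
theorem hatA_resolvent_at_e0 (a b d c : ℝ) (ha : 0 < a) (hc0 : 0 < c) (hc1 : c < 1)
    (σ : Measure ℝ) [IsProbabilityMeasure σ] (hsupp : σ (Set.Icc (-c) c)ᶜ = 0)
    (s : ℕ → ℝ) (hs : ∀ k : ℕ, s k = ∫ x, x ^ k ∂σ)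
    (sZ : ℕ → ℂ) (hsZ0 : sZ 0 = 0) (hsZ : ∀ k : ℕ, sZ (k + 1) = (s k : ℂ))
    (z : ℂ) (hz : a < ‖z - (b : ℂ)‖)
    (hden : (a : ℂ) + (d : ℂ) * (∑' k : ℕ, -(((a : ℂ) / (z - b)) ^ (k + 1)) * sZ k) ≠ 0)
    (f : ℕ → ℂ)
    (hf : ∀ k : ℕ, f k =
      ((a : ℂ) + (d : ℂ) * (∑' j : ℕ, -(((a : ℂ) / (z - b)) ^ (j + 1)) * sZ j))⁻¹
        * (-(((a : ℂ) / (z - b)) ^ (k + 1)))) :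
    Summable (fun k : ℕ => ‖(((a : ℂ) / (z - b)) ^ (k + 1)) * sZ k‖) ∧
    Memℓp f 2 ∧
    (∀ k : ℕ, hatA a b d sZ f k - z * f k = if k = 0 then 1 else 0) := by
  set r : ℂ := (a : ℂ) / (z - b) with hr_def
  have ha' : (0 : ℝ) < ‖z - (b : ℂ)‖ := lt_trans ha hz
  have hzb : z - (b : ℂ) ≠ 0 := by
    intro h; rw [h, norm_zero] at ha'; exact lt_irrefl _ ha'
  have hrnorm : ‖r‖ < 1 := by
    rw [hr_def, norm_div, div_lt_one ha']
    simpa [abs_of_pos ha] using hz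
  have hsb : ∀ k, ‖sZ k‖ ≤ 1 := by
    intro k
    match k with
    | 0 => simp [hsZ0]
    | (k + 1) =>
      rw [hsZ k]
      have hae : ∀ᵐ x ∂σ, x ∈ Set.Icc (-c) c := by
        refine MeasureTheory.ae_iff.mpr ?_
        rw [show {x | ¬ x ∈ Set.Icc (-c) c} = (Set.Icc (-c) c)ᶜ from rfl]
        exact hsupp
      have hb : ∀ᵐ x ∂σ, ‖x ^ k‖ ≤ 1 := by
        filter_upwards [hae] with x hx
        rw [Real.norm_eq_abs, abs_pow]
        apply pow_le_one₀ (abs_nonneg x)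
        rw [abs_le]
        exact ⟨by linarith [hx.1, hc1], by linarith [hx.2, hc1]⟩
      have := MeasureTheory.norm_integral_le_of_norm_le_const (μ := σ) hb
      calc ‖((s k : ℝ) : ℂ)‖ = ‖∫ x, x ^ k ∂σ‖ := by rw [hs, Complex.norm_real]
        _ ≤ 1 := by simpa using this
  have hsum1 : Summable (fun k : ℕ => ‖(r ^ (k + 1)) * sZ k‖) := by
    apply Summable.of_nonneg_of_le (fun k => norm_nonneg _) (fun k => ?_)
      ((summable_geometric_of_lt_one (norm_nonneg r) hrnorm).mul_left ‖r‖)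
    calc ‖(r ^ (k + 1)) * sZ k‖ = ‖r‖ ^ (k + 1) * ‖sZ k‖ := by rw [norm_mul, norm_pow]
      _ ≤ ‖r‖ ^ (k + 1) * 1 := by gcongr; exact hsb k
      _ = ‖r‖ * ‖r‖ ^ k := by rw [mul_one, pow_succ, mul_comm]
  refine ⟨hsum1, ?_, ?_⟩
  · have hgeo : Summable (fun k : ℕ => r ^ (k + 1)) := by
      simpa [pow_succ, mul_comm] using (summable_geometric_of_norm_lt_one hrnorm).mul_left r
    set C : ℂ := ((a : ℂ) + (d : ℂ) * (∑' j : ℕ, -(r ^ (j + 1)) * sZ j))⁻¹ with hC_def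
    have hnf : Summable fun k : ℕ => ‖f k‖ := by
      apply Summable.of_nonneg_of_le (fun k => norm_nonneg _) (fun k => ?_)
        (((summable_geometric_of_lt_one (norm_nonneg r) hrnorm).mul_left ‖r‖).mul_left ‖C‖)
      rw [hf k]
      apply le_of_eq
      calc ‖C * (-(r ^ (k + 1)))‖ = ‖C‖ * ‖r‖ ^ (k + 1) := by
            rw [norm_mul, norm_neg, norm_pow]
        _ = ‖C‖ * (‖r‖ * ‖r‖ ^ k) := by rw [pow_succ, mul_comm ((‖r‖) ^ k)]
    have h1 : Memℓp f 1 := memℓp_gen (by simpa using hnf)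
    exact h1.of_exponent_ge (by norm_num)
  · have hconj : ∀ j, (starRingEnd ℂ) (sZ j) = sZ j := by
      intro j
      match j with
      | 0 => simp [hsZ0]
      | (j + 1) => rw [hsZ]; exact Complex.conj_ofReal _
    set S : ℂ := ∑' j : ℕ, -(r ^ (j + 1)) * sZ j with hS_def
    set D : ℂ := (a : ℂ) + (d : ℂ) * S with hD_def
    have hT : (∑' j : ℕ, f j * (starRingEnd ℂ) (sZ j)) = D⁻¹ * S := by
      have : (fun j : ℕ => f j * (starRingEnd ℂ) (sZ j))
          = fun j : ℕ => D⁻¹ * (-(r ^ (j + 1)) * sZ j) := by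
        funext j; rw [hconj, hf j]; ring
      rw [this, tsum_mul_left]
    intro k
    match k with
    | 0 =>
      simp only [hatA, shiftSeq, if_pos rfl, mul_zero, add_zero, hT, hf 0, ↓reduceIte]
      rw [hr_def]
      field_simp
      have hinv : (z - (b : ℂ)) * (z - (b : ℂ))⁻¹ = 1 := mul_inv_cancel₀ hzb
      linear_combination (a : ℂ) * hinv - hD_def
    | (k + 1) =>
      simp only [hatA, shiftSeq, Nat.succ_ne_zero, if_neg (Nat.succ_ne_zero k),
        Nat.add_sub_cancel, hf (k + 1), hf k, add_zero, ↓reduceIte]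
      rw [hr_def]
      field_simp
      have hinv : (z - (b : ℂ)) * (z - (b : ℂ))⁻¹ = 1 := mul_inv_cancel₀ hzb
      linear_combination ((a : ℂ) ^ 2 * (a : ℂ) ^ k * (z - (b : ℂ))⁻¹ * (z - (b : ℂ))⁻¹ ^ k) * hinv

end
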